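/- Let (Ω,ℱ,P,{ℱ_t}_{t∈[0,T]}) be a filtered probability space with ℱ_0 consisting of null sets and their complements, and let M = {M_t}_{t∈[0,T]} be a martingale with E[|M_T|^4] < ∞. For each t, set M^{(2)}_t = E[(M_T − M_t)^2 | ℱ_t] and M^{(3)}_t = E[(M_T − M_t)^3 | ℱ_t]. Then for any partition 0 = t_0 < t_1 < ⋯ < t_N = T, the realized kurtosis satisfies E[ ∑_{j=1}^{N} { (ΔM_j)^4 + 6 (ΔM_j)^2 ΔM^{(2)}_j + 4 (ΔM_j) ΔM^{(3)}_j + 3 (ΔM^{(2)}_j)^2 } ] = E[(M_T − M_0)^4] − 3 (E[(M_T − M_0)^2])^2, where ΔF_j = F_{t_j} − F_{t_{j−1}} for a process F; that is, its expectation equals the fourth cumulant of M_T − M_0. -/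

import Mathlib

open MeasureTheory Finset Filter
open scoped ENNReal

section Aux
variable {Ω : Type*} {m m0 : MeasurableSpace Ω} {μ : Measure Ω}


/-- Product of two `L²` functions is integrable. -/
lemma integrable_mul_L2 {f g : Ω → ℝ} (hf : MemLp f 2 μ) (hg : MemLp g 2 μ) :
    Integrable (fun ω => f ω * g ω) μ := by
  refine Integrable.mono' ((hf.integrable_sq.add hg.integrable_sq).div_const 2)
    (hf.aestronglyMeasurable.mul hg.aestronglyMeasurable)
    (Eventually.of_forall fun ω => ?_)
  have := sq_nonneg (|f ω| - |g ω|)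
  have h1 : ‖f ω * g ω‖ = |f ω| * |g ω| := by rw [Real.norm_eq_abs, abs_mul]
  simp only [Pi.add_apply]
  rw [h1]
  have h2 : |f ω| ^ 2 = f ω ^ 2 := sq_abs _
  have h3 : |g ω| ^ 2 = g ω ^ 2 := sq_abs _
  nlinarith [abs_nonneg (f ω), abs_nonneg (g ω)]

/-- Conditional Cauchy–Schwarz inequality. -/
lemma condexp_mul_sq_le [IsProbabilityMeasure μ] {X Y : Ω → ℝ}
    (hX2 : Integrable (fun ω => X ω ^ 2) μ) (hY2 : Integrable (fun ω => Y ω ^ 2) μ)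
    (hXY : Integrable (fun ω => X ω * Y ω) μ) :
    ∀ᵐ ω ∂μ, (μ[fun ω' => X ω' * Y ω'|m]) ω ^ 2 ≤
      (μ[fun ω' => X ω' ^ 2|m]) ω * (μ[fun ω' => Y ω' ^ 2|m]) ω := by
  have key : ∀ᵐ ω ∂μ, ∀ q : ℚ,
      0 ≤ (μ[fun ω' => X ω' ^ 2|m]) ω + 2 * (q : ℝ) * (μ[fun ω' => X ω' * Y ω'|m]) ω
        + (q : ℝ) ^ 2 * (μ[fun ω' => Y ω' ^ 2|m]) ω := by
    rw [ae_all_iff]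
    intro q
    set c : ℝ := 2 * (q : ℝ) with hc
    set d : ℝ := (q : ℝ) ^ 2 with hd
    have e : (fun ω => (X ω + (q : ℝ) * Y ω) ^ 2)
        = ((fun ω => X ω ^ 2) + c • (fun ω => X ω * Y ω) + d • (fun ω => Y ω ^ 2)) := by
      funext ω
      simp only [Pi.add_apply, Pi.smul_apply, smul_eq_mul, hc, hd]
      ring
    have hnn : (0 : Ω → ℝ) ≤ᵐ[μ] μ[fun ω => (X ω + (q : ℝ) * Y ω) ^ 2|m] :=
      condExp_nonneg (Eventually.of_forall fun ω => sq_nonneg _)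
    have heq : μ[fun ω => (X ω + (q : ℝ) * Y ω) ^ 2|m] =ᵐ[μ]
        μ[fun ω' => X ω' ^ 2|m] + c • μ[fun ω' => X ω' * Y ω'|m]
          + d • μ[fun ω' => Y ω' ^ 2|m] := by
      rw [e]
      refine (condExp_add (hX2.add (hXY.smul c)) (hY2.smul d) _).trans ?_
      refine ((condExp_add hX2 (hXY.smul c) _).add (ae_eq_refl _)).trans ?_
      exact (((ae_eq_refl _).add (condExp_smul c _ _)).add (condExp_smul d _ _))
    filter_upwards [hnn, heq] with ω h1 h2
    have := h1.trans_eq h2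
    simpa [hc, hd, mul_comm, mul_assoc, mul_left_comm] using this
  filter_upwards [key] with ω hq
  set a := (μ[fun ω' => X ω' ^ 2|m]) ω
  set b := (μ[fun ω' => X ω' * Y ω'|m]) ω
  set c := (μ[fun ω' => Y ω' ^ 2|m]) ω
  have hR : ∀ x : ℝ, 0 ≤ c * (x * x) + (2 * b) * x + a := by
    by_contra hcon
    push_neg at hcon
    obtain ⟨x, hx⟩ := hcon
    have hopen : IsOpen {y : ℝ | c * (y * y) + (2 * b) * y + a < 0} :=
      isOpen_lt (by continuity) continuous_const
    obtain ⟨q, hq'⟩ := Rat.denseRange_cast.exists_mem_open hopen ⟨x, hx⟩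
    have h0 := hq q
    have : (q : ℝ) ^ 2 * c = c * ((q : ℝ) * q) := by ring
    simp only [Set.mem_setOf_eq] at hq'
    nlinarith
  have hd := discrim_le_zero hR
  rw [discrim] at hd
  nlinarith



/-- Conditional Jensen for the square. -/
lemma condexp_sq_le (hm : m ≤ m0) [IsProbabilityMeasure μ] {f : Ω → ℝ}
    (hf : Integrable f μ) (hf2 : Integrable (fun ω => f ω ^ 2) μ) :
    ∀ᵐ ω ∂μ, (μ[f|m]) ω ^ 2 ≤ (μ[fun ω' => f ω' ^ 2|m]) ω := by
  have e1 : (fun ω' => f ω' * (1 : ℝ)) = f := by funext ω; rw [mul_one]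
  have e2 : (fun _ : Ω => (1 : ℝ) ^ 2) = fun _ : Ω => (1 : ℝ) := by funext ω; rw [one_pow]
  have h := condexp_mul_sq_le (m := m) (μ := μ) (X := f) (Y := fun _ => (1 : ℝ)) hf2
    (by simpa [e2] using (integrable_const (1 : ℝ))) (by rw [e1]; exact hf)
  rw [e1, e2, condExp_const hm] at h
  simpa using h

/-- `L²` contraction for conditional expectation. -/
lemma memℒp_two_condexp (hm : m ≤ m0) [IsProbabilityMeasure μ] {f : Ω → ℝ}
    (hf : MemLp f 2 μ) : MemLp (μ[f|m]) 2 μ := by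
  have hfi : Integrable f μ := hf.integrable one_le_two
  have h := condexp_sq_le hm hfi hf.integrable_sq
  have hmeas : AEStronglyMeasurable (μ[f|m]) μ :=
    (stronglyMeasurable_condExp.mono hm).aestronglyMeasurable
  refine (memLp_two_iff_integrable_sq hmeas).2 ?_
  refine Integrable.mono' (integrable_condExp (m := m) (μ := μ) (f := fun ω' => f ω' ^ 2)) (hmeas.pow 2) ?_
  filter_upwards [h] with ω hω
  rw [Real.norm_eq_abs, abs_of_nonneg (sq_nonneg _)]
  exact hω

/-- From `L⁴` to the square in `L²`. -/
lemma memℒp_sq_of_four {f : Ω → ℝ} (hf : MemLp f 4 μ) : MemLp (fun ω => f ω ^ 2) 2 μ := by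
  have h := hf.norm_rpow_div 2
  have e : (fun x => ‖f x‖ ^ (2 : ℝ≥0∞).toReal) = fun ω => f ω ^ 2 := by
    funext ω
    rw [show ((2 : ℝ≥0∞)).toReal = (2 : ℝ) by simp, Real.rpow_two, Real.norm_eq_abs, sq_abs]
  have e2 : (4 : ℝ≥0∞) / 2 = 2 := by
    rw [show (4 : ℝ≥0∞) = 2 * 2 by norm_num, mul_div_assoc,
      ENNReal.div_self two_ne_zero ENNReal.ofNat_ne_top, mul_one]
  rwa [e, e2] at h

lemma integrable_pow_four {f : Ω → ℝ} (hf : MemLp f 4 μ) :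
    Integrable (fun ω => f ω ^ 4) μ :=
  ((memℒp_sq_of_four hf).integrable_sq).congr (Eventually.of_forall fun ω => by ring)

lemma memℒp_four_of_sq {f : Ω → ℝ} (hf : AEStronglyMeasurable f μ)
    (h : MemLp (fun ω => f ω ^ 2) 2 μ) : MemLp f 4 μ := by
  have e : (fun x => ‖f x‖ ^ (2 : ℝ≥0∞).toReal) = fun ω => f ω ^ 2 := by
    funext ω
    rw [show ((2 : ℝ≥0∞)).toReal = (2 : ℝ) by simp, Real.rpow_two, Real.norm_eq_abs, sq_abs]
  have e2 : (4 : ℝ≥0∞) / 2 = 2 := by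
    rw [show (4 : ℝ≥0∞) = 2 * 2 by norm_num, mul_div_assoc,
      ENNReal.div_self two_ne_zero ENNReal.ofNat_ne_top, mul_one]
  refine (memLp_norm_rpow_iff (q := 2) (p := 4) hf two_ne_zero ENNReal.ofNat_ne_top).1 ?_
  rw [e, e2]
  exact h

/-- `L⁴` contraction for conditional expectation. -/
lemma memℒp_four_condexp (hm : m ≤ m0) [IsProbabilityMeasure μ] {f : Ω → ℝ}
    (hf : MemLp f 4 μ) : MemLp (μ[f|m]) 4 μ := by
  have hf2 : MemLp (fun ω => f ω ^ 2) 2 μ := memℒp_sq_of_four hf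
  have hfi : Integrable f μ := hf.integrable (by norm_num)
  have h1 : ∀ᵐ ω ∂μ, (μ[f|m]) ω ^ 2 ≤ (μ[fun ω' => f ω' ^ 2|m]) ω :=
    condexp_sq_le hm hfi (hf2.integrable one_le_two)
  have h2 : MemLp (μ[fun ω' => f ω' ^ 2|m]) 2 μ := memℒp_two_condexp hm hf2
  have hmeas : AEStronglyMeasurable (μ[f|m]) μ :=
    (stronglyMeasurable_condExp.mono hm).aestronglyMeasurable
  refine memℒp_four_of_sq hmeas ((memLp_two_iff_integrable_sq (hmeas.pow 2)).2 ?_)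
  refine Integrable.mono' h2.integrable_sq ((hmeas.pow 2).pow 2) ?_
  filter_upwards [h1] with ω hω
  rw [Real.norm_eq_abs, abs_of_nonneg (sq_nonneg _)]
  simp only [Pi.pow_apply]
  nlinarith [sq_nonneg ((μ[f|m]) ω)]

/-- Pull-out of an `m`-measurable factor under the integral. -/
lemma integral_mul_condexp (hm : m ≤ m0) [IsProbabilityMeasure μ] {f g : Ω → ℝ}
    (hf : StronglyMeasurable[m] f) (hg : Integrable g μ)
    (hfg : Integrable (fun ω => f ω * g ω) μ) :
    ∫ ω, f ω * g ω ∂μ = ∫ ω, f ω * (μ[g|m]) ω ∂μ := by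
  have h := condExp_mul_of_stronglyMeasurable_left hf (show Integrable (f * g) μ from hfg) hg
  calc ∫ ω, f ω * g ω ∂μ = ∫ ω, (μ[f * g|m]) ω ∂μ := (integral_condExp hm).symm
    _ = ∫ ω, f ω * (μ[g|m]) ω ∂μ := integral_congr_ae h



/-- Integrability of `A · E[Q³|m]` for `A, Q ∈ L⁴`. -/
lemma integrable_mul_condexp_cube (hm : m ≤ m0) [IsProbabilityMeasure μ] {A Q : Ω → ℝ}
    (hA : MemLp A 4 μ) (hQ : MemLp Q 4 μ) :
    Integrable (fun ω => A ω * (μ[fun ω' => Q ω' ^ 3|m]) ω) μ := by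
  have hQ2 : MemLp (fun ω => Q ω ^ 2) 2 μ := memℒp_sq_of_four hQ
  have hQ2' : MemLp Q 2 μ := hQ.mono_exponent (by norm_num)
  have eXY : (fun ω => Q ω ^ 2 * Q ω) = fun ω' => Q ω' ^ 3 := by funext ω; ring
  have eX2 : (fun ω => (Q ω ^ 2) ^ 2) = fun ω' => Q ω' ^ 4 := by funext ω; ring
  have hCS := condexp_mul_sq_le (m := m) (μ := μ) (X := fun ω => Q ω ^ 2) (Y := Q)
    (by rw [eX2]; exact integrable_pow_four hQ) hQ2'.integrable_sq
    (integrable_mul_L2 hQ2 hQ2')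
  rw [eXY, eX2] at hCS
  set V := μ[fun ω' => Q ω' ^ 2|m] with hV
  set U := μ[fun ω' => Q ω' ^ 4|m] with hU
  set W := μ[fun ω' => Q ω' ^ 3|m] with hW
  have hVnn : 0 ≤ᵐ[μ] V := condExp_nonneg (Eventually.of_forall fun ω => sq_nonneg _)
  have hUnn : 0 ≤ᵐ[μ] U := condExp_nonneg (Eventually.of_forall fun ω =>
    by positivity)
  have hVL2 : MemLp V 2 μ := memℒp_two_condexp hm hQ2
  have hA2V : Integrable (fun ω => A ω ^ 2 * V ω) μ :=
    integrable_mul_L2 (memℒp_sq_of_four hA) hVL2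
  have hUint : Integrable U μ := integrable_condExp
  refine Integrable.mono' (((hA2V.add hUint).div_const 2))
    (hA.aestronglyMeasurable.mul ((stronglyMeasurable_condExp.mono hm).aestronglyMeasurable))
    ?_
  filter_upwards [hCS, hVnn, hUnn] with ω h1 h2 h3
  simp only [Pi.add_apply, Pi.zero_apply] at *
  have ha : Real.sqrt (V ω) ^ 2 = V ω := Real.sq_sqrt h2
  have hb : Real.sqrt (U ω) ^ 2 = U ω := Real.sq_sqrt h3
  have h1' : W ω ^ 2 ≤ V ω * U ω := by rw [mul_comm]; exact h1
  have hWle : |W ω| ≤ Real.sqrt (V ω) * Real.sqrt (U ω) := by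
    rw [← Real.sqrt_sq_eq_abs, ← Real.sqrt_mul h2]
    exact Real.sqrt_le_sqrt h1'
  have hnorm : ‖A ω * W ω‖ = |A ω| * |W ω| := by rw [Real.norm_eq_abs, abs_mul]
  rw [hnorm]
  have h4 : |A ω| ^ 2 = A ω ^ 2 := sq_abs _
  nlinarith [sq_nonneg (|A ω| * Real.sqrt (V ω) - Real.sqrt (U ω)), abs_nonneg (A ω),
    abs_nonneg (W ω), Real.sqrt_nonneg (V ω), Real.sqrt_nonneg (U ω),
    mul_nonneg (abs_nonneg (A ω)) (mul_nonneg (Real.sqrt_nonneg (V ω)) (Real.sqrt_nonneg (U ω)))]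



/-- A martingale with terminal value in `L⁴` is in `L⁴` at all earlier times. -/
lemma martingale_memℒp_four [IsProbabilityMeasure μ] {F : Filtration ℝ m0} {M : ℝ → Ω → ℝ}
    (hM : Martingale M F μ) {T t : ℝ} (hM4 : MemLp (M T) 4 μ) (h : t ≤ T) :
    MemLp (M t) 4 μ :=
  MemLp.ae_eq (hM.condExp_ae_eq h) (memℒp_four_condexp (F.le t) hM4)

/-- The conditional expectation of a martingale increment vanishes. -/
lemma condexp_increment_zero [IsProbabilityMeasure μ] {F : Filtration ℝ m0} {M : ℝ → Ω → ℝ}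
    (hM : Martingale M F μ) {s t : ℝ} (h : s ≤ t) :
    μ[fun ω => M t ω - M s ω|F s] =ᵐ[μ] 0 := by
  have e : (fun ω => M t ω - M s ω) = M t - M s := rfl
  rw [e]
  have h2 : μ[M s|F s] = M s :=
    condExp_of_stronglyMeasurable (F.le s) (hM.stronglyAdapted s) (hM.integrable s)
  filter_upwards [condExp_sub (hM.integrable t) (hM.integrable s) (m := F s),
    hM.condExp_ae_eq h] with ω hω h3
  rw [hω]
  simp only [Pi.sub_apply, Pi.zero_apply, h3, h2, sub_self]

/-- Expectation of the square of a conditional expectation w.r.t. a trivial σ-algebra. -/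
lemma integral_sq_condexp_trivial [IsProbabilityMeasure μ] {mF : MeasurableSpace Ω}
    (hm : mF ≤ m0) (htriv : ∀ s : Set Ω, MeasurableSet[mF] s → μ s = 0 ∨ μ s = 1)
    {f : Ω → ℝ} : ∫ ω, (μ[f|mF]) ω ^ 2 ∂μ = (∫ ω, f ω ∂μ) ^ 2 := by
  set V := μ[f|mF] with hVdef
  have hVmeas : Measurable[mF] V := stronglyMeasurable_condExp.measurable
  have hVint : Integrable V μ := integrable_condExp
  have hindep : ProbabilityTheory.IndepFun V V μ := by
    rw [ProbabilityTheory.indepFun_iff_measure_inter_preimage_eq_mul]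
    intro s t hs ht
    have hA : MeasurableSet[mF] (V ⁻¹' s) := hVmeas hs
    have hB : MeasurableSet[mF] (V ⁻¹' t) := hVmeas ht
    rcases htriv _ hA with h | h
    · rw [measure_mono_null Set.inter_subset_left h, h, zero_mul]
    · have hAc : μ (V ⁻¹' s)ᶜ = 0 := by
        rw [prob_compl_eq_zero_iff (hm _ hA)]; exact h
      have hsub : V ⁻¹' t ⊆ (V ⁻¹' s ∩ V ⁻¹' t) ∪ (V ⁻¹' s)ᶜ := by
        intro ω hω
        by_cases hωs : ω ∈ V ⁻¹' s
        · exact Or.inl ⟨hωs, hω⟩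
        · exact Or.inr hωs
      have hBle : μ (V ⁻¹' t) ≤ μ (V ⁻¹' s ∩ V ⁻¹' t) := by
        calc μ (V ⁻¹' t) ≤ μ ((V ⁻¹' s ∩ V ⁻¹' t) ∪ (V ⁻¹' s)ᶜ) := measure_mono hsub
          _ ≤ μ (V ⁻¹' s ∩ V ⁻¹' t) + μ (V ⁻¹' s)ᶜ := measure_union_le _ _
          _ = μ (V ⁻¹' s ∩ V ⁻¹' t) := by rw [hAc, add_zero]
      rw [le_antisymm (measure_mono Set.inter_subset_right) hBle, h, one_mul]
  have hmul := hindep.integral_mul_eq_mul_integral hVint.aestronglyMeasurable hVint.aestronglyMeasurable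
  calc ∫ ω, V ω ^ 2 ∂μ = ∫ ω, (V * V) ω ∂μ := by
        refine integral_congr_ae (Eventually.of_forall fun ω => ?_)
        simp only [Pi.mul_apply]; ring
    _ = (∫ ω, V ω ∂μ) * ∫ ω, V ω ∂μ := hmul
    _ = (∫ ω, f ω ∂μ) ^ 2 := by rw [hVdef, integral_condExp hm]; ring

end Aux

/-- One-step identity: the expected realized-kurtosis increment over `[s,u]` telescopes. -/
lemma interval_step {Ω : Type*} {m0 : MeasurableSpace Ω} (μ : Measure Ω)
    [IsProbabilityMeasure μ] (F : Filtration ℝ m0) (M : ℝ → Ω → ℝ)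
    (hM : Martingale M F μ) (T : ℝ) (hM4 : MemLp (M T) 4 μ)
    {s u : ℝ} (hsu : s ≤ u) (huT : u ≤ T) :
    ∫ ω, ((M u ω - M s ω) ^ 4 +
        6 * (M u ω - M s ω) ^ 2 *
          ((μ[(fun ω' => (M T ω' - M u ω') ^ 2)|F u]) ω -
            (μ[(fun ω' => (M T ω' - M s ω') ^ 2)|F s]) ω) +
        4 * (M u ω - M s ω) *
          ((μ[(fun ω' => (M T ω' - M u ω') ^ 3)|F u]) ω -
            (μ[(fun ω' => (M T ω' - M s ω') ^ 3)|F s]) ω) +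
        3 * ((μ[(fun ω' => (M T ω' - M u ω') ^ 2)|F u]) ω -
            (μ[(fun ω' => (M T ω' - M s ω') ^ 2)|F s]) ω) ^ 2) ∂μ
      = ((∫ ω, (M T ω - M s ω) ^ 4 ∂μ)
          - 3 * ∫ ω, ((μ[(fun ω' => (M T ω' - M s ω') ^ 2)|F s]) ω) ^ 2 ∂μ)
        - ((∫ ω, (M T ω - M u ω) ^ 4 ∂μ)
          - 3 * ∫ ω, ((μ[(fun ω' => (M T ω' - M u ω') ^ 2)|F u]) ω) ^ 2 ∂μ) := by
  have hsT : s ≤ T := hsu.trans huT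
  have hms : F s ≤ m0 := F.le s
  have hmu : F u ≤ m0 := F.le u
  have hmsu : F s ≤ F u := F.mono hsu
  -- L⁴ memberships
  have hMs4 : MemLp (M s) 4 μ := martingale_memℒp_four hM hM4 hsT
  have hMu4 : MemLp (M u) 4 μ := martingale_memℒp_four hM hM4 huT
  have hA4 : MemLp (fun ω => M u ω - M s ω) 4 μ := hMu4.sub hMs4
  have hQs4 : MemLp (fun ω => M T ω - M s ω) 4 μ := hM4.sub hMs4
  have hQu4 : MemLp (fun ω => M T ω - M u ω) 4 μ := hM4.sub hMu4
  -- L² memberships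
  have hA2 : MemLp (fun ω => (M u ω - M s ω) ^ 2) 2 μ := memℒp_sq_of_four hA4
  have hQs2 : MemLp (fun ω => (M T ω - M s ω) ^ 2) 2 μ := memℒp_sq_of_four hQs4
  have hQu2 : MemLp (fun ω => (M T ω - M u ω) ^ 2) 2 μ := memℒp_sq_of_four hQu4
  have hA2' : MemLp (fun ω => M u ω - M s ω) 2 μ := hA4.mono_exponent (by norm_num)
  have hQu2' : MemLp (fun ω => M T ω - M u ω) 2 μ := hQu4.mono_exponent (by norm_num)
  have hAQu : MemLp (fun ω => (M u ω - M s ω) * (M T ω - M u ω)) 2 μ := by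
    refine (memLp_two_iff_integrable_sq
      (f := fun ω => (M u ω - M s ω) * (M T ω - M u ω))
      (hA2'.aestronglyMeasurable.mul hQu2'.aestronglyMeasurable)).2 ?_
    exact (integrable_mul_L2 hA2 hQu2).congr (Eventually.of_forall fun ω => by ring)
  have hVsL2 : MemLp (μ[(fun ω' => (M T ω' - M s ω') ^ 2)|F s]) 2 μ :=
    memℒp_two_condexp hms hQs2
  have hVuL2 : MemLp (μ[(fun ω' => (M T ω' - M u ω') ^ 2)|F u]) 2 μ :=
    memℒp_two_condexp hmu hQu2
  -- conditional expectations of increments vanish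
  have hQu0 : μ[fun ω => M T ω - M u ω|F u] =ᵐ[μ] 0 := condexp_increment_zero hM huT
  have hA0 : μ[fun ω => M u ω - M s ω|F s] =ᵐ[μ] 0 := condexp_increment_zero hM hsu
  -- strong measurability
  have sA : StronglyMeasurable[F u] (fun ω => M u ω - M s ω) :=
    (hM.stronglyAdapted u).sub ((hM.stronglyAdapted s).mono hmsu)
  have sVs : StronglyMeasurable[F s] (μ[(fun ω' => (M T ω' - M s ω') ^ 2)|F s]) :=
    stronglyMeasurable_condExp
  have sWs : StronglyMeasurable[F s] (μ[(fun ω' => (M T ω' - M s ω') ^ 3)|F s]) :=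
    stronglyMeasurable_condExp
  -- integrability of products
  have iA4 : Integrable (fun ω => (M u ω - M s ω) ^ 4) μ := integrable_pow_four hA4
  have iQs4 : Integrable (fun ω => (M T ω - M s ω) ^ 4) μ := integrable_pow_four hQs4
  have iQu4 : Integrable (fun ω => (M T ω - M u ω) ^ 4) μ := integrable_pow_four hQu4
  have iA3Qu : Integrable (fun ω => (M u ω - M s ω) ^ 3 * (M T ω - M u ω)) μ :=
    (integrable_mul_L2 hA2 hAQu).congr (Eventually.of_forall fun ω => by ring)
  have iA2Qu2 : Integrable (fun ω => (M u ω - M s ω) ^ 2 * (M T ω - M u ω) ^ 2) μ :=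
    integrable_mul_L2 hA2 hQu2
  have iAQu3 : Integrable (fun ω => (M u ω - M s ω) * (M T ω - M u ω) ^ 3) μ :=
    (integrable_mul_L2 hAQu hQu2).congr (Eventually.of_forall fun ω => by ring)
  have iQu3 : Integrable (fun ω => (M T ω - M u ω) ^ 3) μ :=
    (integrable_mul_L2 hQu2 hQu2').congr (Eventually.of_forall fun ω => by ring)
  have iA2Vu : Integrable
      (fun ω => (M u ω - M s ω) ^ 2 * (μ[(fun ω' => (M T ω' - M u ω') ^ 2)|F u]) ω) μ :=
    integrable_mul_L2 hA2 hVuL2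
  have iA2Vs : Integrable
      (fun ω => (M u ω - M s ω) ^ 2 * (μ[(fun ω' => (M T ω' - M s ω') ^ 2)|F s]) ω) μ :=
    integrable_mul_L2 hA2 hVsL2
  have iAWu : Integrable
      (fun ω => (M u ω - M s ω) * (μ[(fun ω' => (M T ω' - M u ω') ^ 3)|F u]) ω) μ :=
    integrable_mul_condexp_cube hmu hA4 hQu4
  have iAWs : Integrable
      (fun ω => (M u ω - M s ω) * (μ[(fun ω' => (M T ω' - M s ω') ^ 3)|F s]) ω) μ :=
    integrable_mul_condexp_cube hms hA4 hQs4
  have iVsVu : Integrable (fun ω => (μ[(fun ω' => (M T ω' - M s ω') ^ 2)|F s]) ω *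
      (μ[(fun ω' => (M T ω' - M u ω') ^ 2)|F u]) ω) μ := integrable_mul_L2 hVsL2 hVuL2
  have hCVu : MemLp (μ[μ[(fun ω' => (M T ω' - M u ω') ^ 2)|F u]|F s]) 2 μ :=
    memℒp_two_condexp hms hVuL2
  have iVsCVu : Integrable (fun ω => (μ[(fun ω' => (M T ω' - M s ω') ^ 2)|F s]) ω *
      (μ[μ[(fun ω' => (M T ω' - M u ω') ^ 2)|F u]|F s]) ω) μ := integrable_mul_L2 hVsL2 hCVu
  have iVs2 : Integrable (fun ω => ((μ[(fun ω' => (M T ω' - M s ω') ^ 2)|F s]) ω) ^ 2) μ :=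
    hVsL2.integrable_sq
  have iVu2 : Integrable (fun ω => ((μ[(fun ω' => (M T ω' - M u ω') ^ 2)|F u]) ω) ^ 2) μ :=
    hVuL2.integrable_sq
  -- e2 : ∫ A³ Qu = 0
  have e2 : ∫ ω, (M u ω - M s ω) ^ 3 * (M T ω - M u ω) ∂μ = 0 := by
    rw [integral_mul_condexp (f := fun ω => (M u ω - M s ω) ^ 3) hmu (sA.pow 3) (hQu2'.integrable one_le_two) iA3Qu]
    refine integral_eq_zero_of_ae ?_
    filter_upwards [hQu0] with ω h
    simp only [h, Pi.zero_apply, mul_zero]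
  -- e3 : ∫ A² Qu² = ∫ A² Vu
  have e3 : ∫ ω, (M u ω - M s ω) ^ 2 * (M T ω - M u ω) ^ 2 ∂μ
      = ∫ ω, (M u ω - M s ω) ^ 2 * (μ[(fun ω' => (M T ω' - M u ω') ^ 2)|F u]) ω ∂μ :=
    integral_mul_condexp hmu (sA.pow 2) (hQu2.integrable one_le_two) iA2Qu2
  -- e4 : ∫ A Qu³ = ∫ A Wu
  have e4 : ∫ ω, (M u ω - M s ω) * (M T ω - M u ω) ^ 3 ∂μ
      = ∫ ω, (M u ω - M s ω) * (μ[(fun ω' => (M T ω' - M u ω') ^ 3)|F u]) ω ∂μ :=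
    integral_mul_condexp hmu sA iQu3 iAQu3
  -- e1 : fourth-moment expansion
  have e1 : ∫ ω, (M T ω - M s ω) ^ 4 ∂μ
      = (∫ ω, (M u ω - M s ω) ^ 4 ∂μ)
        + 4 * ∫ ω, (M u ω - M s ω) ^ 3 * (M T ω - M u ω) ∂μ
        + 6 * ∫ ω, (M u ω - M s ω) ^ 2 * (M T ω - M u ω) ^ 2 ∂μ
        + 4 * ∫ ω, (M u ω - M s ω) * (M T ω - M u ω) ^ 3 ∂μ
        + ∫ ω, (M T ω - M u ω) ^ 4 ∂μ := by
    have hexp : ∀ ω, (M T ω - M s ω) ^ 4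
        = (M u ω - M s ω) ^ 4 + 4 * ((M u ω - M s ω) ^ 3 * (M T ω - M u ω))
          + 6 * ((M u ω - M s ω) ^ 2 * (M T ω - M u ω) ^ 2)
          + 4 * ((M u ω - M s ω) * (M T ω - M u ω) ^ 3) + (M T ω - M u ω) ^ 4 :=
      fun ω => by ring
    have t0 : ∫ ω, (M T ω - M s ω) ^ 4 ∂μ
        = ∫ ω, ((M u ω - M s ω) ^ 4 + 4 * ((M u ω - M s ω) ^ 3 * (M T ω - M u ω))
          + 6 * ((M u ω - M s ω) ^ 2 * (M T ω - M u ω) ^ 2)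
          + 4 * ((M u ω - M s ω) * (M T ω - M u ω) ^ 3) + (M T ω - M u ω) ^ 4) ∂μ :=
      integral_congr_ae (Eventually.of_forall hexp)
    have t4 : ∫ ω, ((M u ω - M s ω) ^ 4 + 4 * ((M u ω - M s ω) ^ 3 * (M T ω - M u ω))
          + 6 * ((M u ω - M s ω) ^ 2 * (M T ω - M u ω) ^ 2)
          + 4 * ((M u ω - M s ω) * (M T ω - M u ω) ^ 3) + (M T ω - M u ω) ^ 4) ∂μ
        = (∫ ω, ((M u ω - M s ω) ^ 4 + 4 * ((M u ω - M s ω) ^ 3 * (M T ω - M u ω))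
          + 6 * ((M u ω - M s ω) ^ 2 * (M T ω - M u ω) ^ 2)
          + 4 * ((M u ω - M s ω) * (M T ω - M u ω) ^ 3)) ∂μ)
          + ∫ ω, (M T ω - M u ω) ^ 4 ∂μ :=
      integral_add ((((iA4.add (iA3Qu.const_mul 4)).add (iA2Qu2.const_mul 6)).add
        (iAQu3.const_mul 4))) iQu4
    have t3 : ∫ ω, ((M u ω - M s ω) ^ 4 + 4 * ((M u ω - M s ω) ^ 3 * (M T ω - M u ω))
          + 6 * ((M u ω - M s ω) ^ 2 * (M T ω - M u ω) ^ 2)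
          + 4 * ((M u ω - M s ω) * (M T ω - M u ω) ^ 3)) ∂μ
        = (∫ ω, ((M u ω - M s ω) ^ 4 + 4 * ((M u ω - M s ω) ^ 3 * (M T ω - M u ω))
          + 6 * ((M u ω - M s ω) ^ 2 * (M T ω - M u ω) ^ 2)) ∂μ)
          + ∫ ω, 4 * ((M u ω - M s ω) * (M T ω - M u ω) ^ 3) ∂μ :=
      integral_add (((iA4.add (iA3Qu.const_mul 4)).add (iA2Qu2.const_mul 6)))
        (iAQu3.const_mul 4)
    have t2 : ∫ ω, ((M u ω - M s ω) ^ 4 + 4 * ((M u ω - M s ω) ^ 3 * (M T ω - M u ω))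
          + 6 * ((M u ω - M s ω) ^ 2 * (M T ω - M u ω) ^ 2)) ∂μ
        = (∫ ω, ((M u ω - M s ω) ^ 4 + 4 * ((M u ω - M s ω) ^ 3 * (M T ω - M u ω))) ∂μ)
          + ∫ ω, 6 * ((M u ω - M s ω) ^ 2 * (M T ω - M u ω) ^ 2) ∂μ :=
      integral_add ((iA4.add (iA3Qu.const_mul 4))) (iA2Qu2.const_mul 6)
    have t1 : ∫ ω, ((M u ω - M s ω) ^ 4 + 4 * ((M u ω - M s ω) ^ 3 * (M T ω - M u ω))) ∂μ
        = (∫ ω, (M u ω - M s ω) ^ 4 ∂μ)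
          + ∫ ω, 4 * ((M u ω - M s ω) ^ 3 * (M T ω - M u ω)) ∂μ :=
      integral_add iA4 (iA3Qu.const_mul 4)
    have m1 : ∫ ω, 4 * ((M u ω - M s ω) ^ 3 * (M T ω - M u ω)) ∂μ
        = 4 * ∫ ω, (M u ω - M s ω) ^ 3 * (M T ω - M u ω) ∂μ := integral_const_mul 4 _
    have m2 : ∫ ω, 6 * ((M u ω - M s ω) ^ 2 * (M T ω - M u ω) ^ 2) ∂μ
        = 6 * ∫ ω, (M u ω - M s ω) ^ 2 * (M T ω - M u ω) ^ 2 ∂μ := integral_const_mul 6 _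
    have m3 : ∫ ω, 4 * ((M u ω - M s ω) * (M T ω - M u ω) ^ 3) ∂μ
        = 4 * ∫ ω, (M u ω - M s ω) * (M T ω - M u ω) ^ 3 ∂μ := integral_const_mul 4 _
    linarith [t0, t4, t3, t2, t1, m1, m2, m3]
  -- e5 : ∫ A Ws = 0
  have e5 : ∫ ω, (M u ω - M s ω) * (μ[(fun ω' => (M T ω' - M s ω') ^ 3)|F s]) ω ∂μ = 0 := by
    have hcomm : ∫ ω, (M u ω - M s ω) * (μ[(fun ω' => (M T ω' - M s ω') ^ 3)|F s]) ω ∂μ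
        = ∫ ω, (μ[(fun ω' => (M T ω' - M s ω') ^ 3)|F s]) ω * (M u ω - M s ω) ∂μ :=
      integral_congr_ae (Eventually.of_forall fun ω => mul_comm _ _)
    rw [hcomm, integral_mul_condexp (f := μ[(fun ω' => (M T ω' - M s ω') ^ 3)|F s])
      (g := fun ω => M u ω - M s ω) hms sWs (hA2'.integrable one_le_two)
      (iAWs.congr (Eventually.of_forall fun ω => mul_comm _ _))]
    refine integral_eq_zero_of_ae ?_
    filter_upwards [hA0] with ω h
    simp only [h, Pi.zero_apply, mul_zero]
  -- e6 : μ[A²|F s] = Vs - μ[Vu|F s]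
  have hAQuInt : Integrable (fun ω => (M u ω - M s ω) * (M T ω - M u ω)) μ :=
    hAQu.integrable one_le_two
  have c2 : μ[fun ω => (M u ω - M s ω) * (M T ω - M u ω)|F s] =ᵐ[μ] 0 := by
    have inner : μ[fun ω => (M u ω - M s ω) * (M T ω - M u ω)|F u] =ᵐ[μ] 0 := by
      have hpull := condExp_mul_of_stronglyMeasurable_left sA
        (show Integrable ((fun ω => M u ω - M s ω) * fun ω => M T ω - M u ω) μ from hAQuInt)
        (hQu2'.integrable one_le_two)
      refine hpull.trans ?_
      filter_upwards [hQu0] with ω h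
      simp only [Pi.mul_apply, h, Pi.zero_apply, mul_zero]
    have tower : μ[fun ω => (M u ω - M s ω) * (M T ω - M u ω)|F s]
        =ᵐ[μ] μ[μ[fun ω => (M u ω - M s ω) * (M T ω - M u ω)|F u]|F s] :=
      (condExp_condExp_of_le hmsu hmu).symm
    refine tower.trans ?_
    have : μ[μ[fun ω => (M u ω - M s ω) * (M T ω - M u ω)|F u]|F s]
        =ᵐ[μ] μ[(0 : Ω → ℝ)|F s] := condExp_congr_ae inner
    rwa [condExp_zero] at this
  have c3 : μ[fun ω' => (M T ω' - M u ω') ^ 2|F s]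
      =ᵐ[μ] μ[μ[(fun ω' => (M T ω' - M u ω') ^ 2)|F u]|F s] :=
    (condExp_condExp_of_le hmsu hmu).symm
  have c1 : μ[(fun ω' => (M T ω' - M s ω') ^ 2)|F s]
      =ᵐ[μ] μ[fun ω => (M u ω - M s ω) ^ 2|F s]
        + μ[fun ω => 2 * ((M u ω - M s ω) * (M T ω - M u ω))|F s]
        + μ[fun ω' => (M T ω' - M u ω') ^ 2|F s] := by
    have efn : (fun ω' => (M T ω' - M s ω') ^ 2)
        = ((fun ω => (M u ω - M s ω) ^ 2)
          + (fun ω => 2 * ((M u ω - M s ω) * (M T ω - M u ω)))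
          + (fun ω' => (M T ω' - M u ω') ^ 2)) := by
      funext ω
      simp only [Pi.add_apply]
      ring
    rw [efn]
    refine (condExp_add ((hA2.integrable one_le_two).add (hAQuInt.const_mul 2))
      (hQu2.integrable one_le_two) _).trans ?_
    exact (condExp_add (hA2.integrable one_le_two) (hAQuInt.const_mul 2) _).add
      (ae_eq_refl _)
  have c2' : μ[fun ω => 2 * ((M u ω - M s ω) * (M T ω - M u ω))|F s] =ᵐ[μ] 0 := by
    have e2fn : (fun ω => 2 * ((M u ω - M s ω) * (M T ω - M u ω)))
        = (2 : ℝ) • (fun ω => (M u ω - M s ω) * (M T ω - M u ω)) := by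
      funext ω; simp [Pi.smul_apply, smul_eq_mul]
    rw [e2fn]
    refine (condExp_smul (2 : ℝ) _ _).trans ?_
    filter_upwards [c2] with ω h
    simp only [Pi.smul_apply, h, Pi.zero_apply, smul_eq_mul, mul_zero]
  have e6 : μ[fun ω => (M u ω - M s ω) ^ 2|F s]
      =ᵐ[μ] fun ω => (μ[(fun ω' => (M T ω' - M s ω') ^ 2)|F s]) ω
        - (μ[μ[(fun ω' => (M T ω' - M u ω') ^ 2)|F u]|F s]) ω := by
    filter_upwards [c1, c2', c3] with ω h1 h2 h3
    simp only [Pi.add_apply, Pi.zero_apply] at h1 h2 h3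
    rw [h1, h2, h3]
    ring
  -- e7 : ∫ A² Vs = ∫ Vs² - ∫ Vs Vu
  have e7 : ∫ ω, (M u ω - M s ω) ^ 2 * (μ[(fun ω' => (M T ω' - M s ω') ^ 2)|F s]) ω ∂μ
      = (∫ ω, ((μ[(fun ω' => (M T ω' - M s ω') ^ 2)|F s]) ω) ^ 2 ∂μ)
        - ∫ ω, (μ[(fun ω' => (M T ω' - M s ω') ^ 2)|F s]) ω *
            (μ[(fun ω' => (M T ω' - M u ω') ^ 2)|F u]) ω ∂μ := by
    have step1 : ∫ ω, (M u ω - M s ω) ^ 2 * (μ[(fun ω' => (M T ω' - M s ω') ^ 2)|F s]) ω ∂μ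
        = ∫ ω, (μ[(fun ω' => (M T ω' - M s ω') ^ 2)|F s]) ω * (M u ω - M s ω) ^ 2 ∂μ :=
      integral_congr_ae (Eventually.of_forall fun ω => mul_comm _ _)
    have step2 : ∫ ω, (μ[(fun ω' => (M T ω' - M s ω') ^ 2)|F s]) ω * (M u ω - M s ω) ^ 2 ∂μ
        = ∫ ω, (μ[(fun ω' => (M T ω' - M s ω') ^ 2)|F s]) ω *
            (μ[fun ω => (M u ω - M s ω) ^ 2|F s]) ω ∂μ :=
      integral_mul_condexp hms sVs (hA2.integrable one_le_two)
        (iA2Vs.congr (Eventually.of_forall fun ω => mul_comm _ _))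
    have step3 : ∫ ω, (μ[(fun ω' => (M T ω' - M s ω') ^ 2)|F s]) ω *
          (μ[fun ω => (M u ω - M s ω) ^ 2|F s]) ω ∂μ
        = ∫ ω, ((μ[(fun ω' => (M T ω' - M s ω') ^ 2)|F s]) ω ^ 2
            - (μ[(fun ω' => (M T ω' - M s ω') ^ 2)|F s]) ω *
              (μ[μ[(fun ω' => (M T ω' - M u ω') ^ 2)|F u]|F s]) ω) ∂μ := by
      refine integral_congr_ae ?_
      filter_upwards [e6] with ω h
      rw [h]
      ring
    have step4 : ∫ ω, ((μ[(fun ω' => (M T ω' - M s ω') ^ 2)|F s]) ω ^ 2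
          - (μ[(fun ω' => (M T ω' - M s ω') ^ 2)|F s]) ω *
            (μ[μ[(fun ω' => (M T ω' - M u ω') ^ 2)|F u]|F s]) ω) ∂μ
        = (∫ ω, ((μ[(fun ω' => (M T ω' - M s ω') ^ 2)|F s]) ω) ^ 2 ∂μ)
          - ∫ ω, (μ[(fun ω' => (M T ω' - M s ω') ^ 2)|F s]) ω *
              (μ[μ[(fun ω' => (M T ω' - M u ω') ^ 2)|F u]|F s]) ω ∂μ :=
      integral_sub iVs2 iVsCVu
    have step5 : ∫ ω, (μ[(fun ω' => (M T ω' - M s ω') ^ 2)|F s]) ω *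
          (μ[(fun ω' => (M T ω' - M u ω') ^ 2)|F u]) ω ∂μ
        = ∫ ω, (μ[(fun ω' => (M T ω' - M s ω') ^ 2)|F s]) ω *
            (μ[μ[(fun ω' => (M T ω' - M u ω') ^ 2)|F u]|F s]) ω ∂μ :=
      integral_mul_condexp hms sVs integrable_condExp iVsVu
    rw [step1, step2, step3, step4, step5]
  -- e8 : split the left-hand side
  have e8 : ∫ ω, ((M u ω - M s ω) ^ 4 +
        6 * (M u ω - M s ω) ^ 2 *
          ((μ[(fun ω' => (M T ω' - M u ω') ^ 2)|F u]) ω -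
            (μ[(fun ω' => (M T ω' - M s ω') ^ 2)|F s]) ω) +
        4 * (M u ω - M s ω) *
          ((μ[(fun ω' => (M T ω' - M u ω') ^ 3)|F u]) ω -
            (μ[(fun ω' => (M T ω' - M s ω') ^ 3)|F s]) ω) +
        3 * ((μ[(fun ω' => (M T ω' - M u ω') ^ 2)|F u]) ω -
            (μ[(fun ω' => (M T ω' - M s ω') ^ 2)|F s]) ω) ^ 2) ∂μ
      = (∫ ω, (M u ω - M s ω) ^ 4 ∂μ)
        + 6 * ((∫ ω, (M u ω - M s ω) ^ 2 * (μ[(fun ω' => (M T ω' - M u ω') ^ 2)|F u]) ω ∂μ)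
          - ∫ ω, (M u ω - M s ω) ^ 2 * (μ[(fun ω' => (M T ω' - M s ω') ^ 2)|F s]) ω ∂μ)
        + 4 * ((∫ ω, (M u ω - M s ω) * (μ[(fun ω' => (M T ω' - M u ω') ^ 3)|F u]) ω ∂μ)
          - ∫ ω, (M u ω - M s ω) * (μ[(fun ω' => (M T ω' - M s ω') ^ 3)|F s]) ω ∂μ)
        + 3 * ((∫ ω, ((μ[(fun ω' => (M T ω' - M u ω') ^ 2)|F u]) ω) ^ 2 ∂μ)
          - 2 * (∫ ω, (μ[(fun ω' => (M T ω' - M s ω') ^ 2)|F s]) ω *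
              (μ[(fun ω' => (M T ω' - M u ω') ^ 2)|F u]) ω ∂μ)
          + ∫ ω, ((μ[(fun ω' => (M T ω' - M s ω') ^ 2)|F s]) ω) ^ 2 ∂μ) := by
    have ig2 : Integrable (fun ω => 6 * (M u ω - M s ω) ^ 2 *
        ((μ[(fun ω' => (M T ω' - M u ω') ^ 2)|F u]) ω -
          (μ[(fun ω' => (M T ω' - M s ω') ^ 2)|F s]) ω)) μ :=
      ((iA2Vu.sub iA2Vs).const_mul 6).congr
        (Eventually.of_forall fun ω => by simp only [Pi.sub_apply]; ring)
    have ig3 : Integrable (fun ω => 4 * (M u ω - M s ω) *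
        ((μ[(fun ω' => (M T ω' - M u ω') ^ 3)|F u]) ω -
          (μ[(fun ω' => (M T ω' - M s ω') ^ 3)|F s]) ω)) μ :=
      ((iAWu.sub iAWs).const_mul 4).congr
        (Eventually.of_forall fun ω => by simp only [Pi.sub_apply]; ring)
    have ig4 : Integrable (fun ω => 3 * ((μ[(fun ω' => (M T ω' - M u ω') ^ 2)|F u]) ω -
          (μ[(fun ω' => (M T ω' - M s ω') ^ 2)|F s]) ω) ^ 2) μ :=
      ((hVuL2.sub hVsL2).integrable_sq.const_mul 3)
    have t3 : ∫ ω, ((M u ω - M s ω) ^ 4 +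
        6 * (M u ω - M s ω) ^ 2 *
          ((μ[(fun ω' => (M T ω' - M u ω') ^ 2)|F u]) ω -
            (μ[(fun ω' => (M T ω' - M s ω') ^ 2)|F s]) ω) +
        4 * (M u ω - M s ω) *
          ((μ[(fun ω' => (M T ω' - M u ω') ^ 3)|F u]) ω -
            (μ[(fun ω' => (M T ω' - M s ω') ^ 3)|F s]) ω) +
        3 * ((μ[(fun ω' => (M T ω' - M u ω') ^ 2)|F u]) ω -
            (μ[(fun ω' => (M T ω' - M s ω') ^ 2)|F s]) ω) ^ 2) ∂μ
        = (∫ ω, ((M u ω - M s ω) ^ 4 +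
          6 * (M u ω - M s ω) ^ 2 *
            ((μ[(fun ω' => (M T ω' - M u ω') ^ 2)|F u]) ω -
              (μ[(fun ω' => (M T ω' - M s ω') ^ 2)|F s]) ω) +
          4 * (M u ω - M s ω) *
            ((μ[(fun ω' => (M T ω' - M u ω') ^ 3)|F u]) ω -
              (μ[(fun ω' => (M T ω' - M s ω') ^ 3)|F s]) ω)) ∂μ)
          + ∫ ω, 3 * ((μ[(fun ω' => (M T ω' - M u ω') ^ 2)|F u]) ω -
              (μ[(fun ω' => (M T ω' - M s ω') ^ 2)|F s]) ω) ^ 2 ∂μ :=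
      integral_add ((iA4.add ig2).add ig3) ig4
    have t2 : ∫ ω, ((M u ω - M s ω) ^ 4 +
          6 * (M u ω - M s ω) ^ 2 *
            ((μ[(fun ω' => (M T ω' - M u ω') ^ 2)|F u]) ω -
              (μ[(fun ω' => (M T ω' - M s ω') ^ 2)|F s]) ω) +
          4 * (M u ω - M s ω) *
            ((μ[(fun ω' => (M T ω' - M u ω') ^ 3)|F u]) ω -
              (μ[(fun ω' => (M T ω' - M s ω') ^ 3)|F s]) ω)) ∂μ
        = (∫ ω, ((M u ω - M s ω) ^ 4 +
          6 * (M u ω - M s ω) ^ 2 *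
            ((μ[(fun ω' => (M T ω' - M u ω') ^ 2)|F u]) ω -
              (μ[(fun ω' => (M T ω' - M s ω') ^ 2)|F s]) ω)) ∂μ)
          + ∫ ω, 4 * (M u ω - M s ω) *
            ((μ[(fun ω' => (M T ω' - M u ω') ^ 3)|F u]) ω -
              (μ[(fun ω' => (M T ω' - M s ω') ^ 3)|F s]) ω) ∂μ :=
      integral_add (iA4.add ig2) ig3
    have t1 : ∫ ω, ((M u ω - M s ω) ^ 4 +
          6 * (M u ω - M s ω) ^ 2 *
            ((μ[(fun ω' => (M T ω' - M u ω') ^ 2)|F u]) ω -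
              (μ[(fun ω' => (M T ω' - M s ω') ^ 2)|F s]) ω)) ∂μ
        = (∫ ω, (M u ω - M s ω) ^ 4 ∂μ)
          + ∫ ω, 6 * (M u ω - M s ω) ^ 2 *
            ((μ[(fun ω' => (M T ω' - M u ω') ^ 2)|F u]) ω -
              (μ[(fun ω' => (M T ω' - M s ω') ^ 2)|F s]) ω) ∂μ :=
      integral_add iA4 ig2
    have h2a : ∫ ω, ((M u ω - M s ω) ^ 2 * (μ[(fun ω' => (M T ω' - M u ω') ^ 2)|F u]) ω
          - (M u ω - M s ω) ^ 2 * (μ[(fun ω' => (M T ω' - M s ω') ^ 2)|F s]) ω) ∂μ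
        = (∫ ω, (M u ω - M s ω) ^ 2 * (μ[(fun ω' => (M T ω' - M u ω') ^ 2)|F u]) ω ∂μ)
          - ∫ ω, (M u ω - M s ω) ^ 2 * (μ[(fun ω' => (M T ω' - M s ω') ^ 2)|F s]) ω ∂μ :=
      integral_sub iA2Vu iA2Vs
    have h2b : ∫ ω, 6 * ((M u ω - M s ω) ^ 2 * (μ[(fun ω' => (M T ω' - M u ω') ^ 2)|F u]) ω
          - (M u ω - M s ω) ^ 2 * (μ[(fun ω' => (M T ω' - M s ω') ^ 2)|F s]) ω) ∂μ
        = 6 * ∫ ω, ((M u ω - M s ω) ^ 2 * (μ[(fun ω' => (M T ω' - M u ω') ^ 2)|F u]) ω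
          - (M u ω - M s ω) ^ 2 * (μ[(fun ω' => (M T ω' - M s ω') ^ 2)|F s]) ω) ∂μ :=
      integral_const_mul 6 _
    have h2c : ∫ ω, 6 * (M u ω - M s ω) ^ 2 *
          ((μ[(fun ω' => (M T ω' - M u ω') ^ 2)|F u]) ω -
            (μ[(fun ω' => (M T ω' - M s ω') ^ 2)|F s]) ω) ∂μ
        = ∫ ω, 6 * ((M u ω - M s ω) ^ 2 * (μ[(fun ω' => (M T ω' - M u ω') ^ 2)|F u]) ω
          - (M u ω - M s ω) ^ 2 * (μ[(fun ω' => (M T ω' - M s ω') ^ 2)|F s]) ω) ∂μ :=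
      integral_congr_ae (Eventually.of_forall fun ω => by ring)
    have h3a : ∫ ω, ((M u ω - M s ω) * (μ[(fun ω' => (M T ω' - M u ω') ^ 3)|F u]) ω
          - (M u ω - M s ω) * (μ[(fun ω' => (M T ω' - M s ω') ^ 3)|F s]) ω) ∂μ
        = (∫ ω, (M u ω - M s ω) * (μ[(fun ω' => (M T ω' - M u ω') ^ 3)|F u]) ω ∂μ)
          - ∫ ω, (M u ω - M s ω) * (μ[(fun ω' => (M T ω' - M s ω') ^ 3)|F s]) ω ∂μ :=
      integral_sub iAWu iAWs
    have h3b : ∫ ω, 4 * ((M u ω - M s ω) * (μ[(fun ω' => (M T ω' - M u ω') ^ 3)|F u]) ω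
          - (M u ω - M s ω) * (μ[(fun ω' => (M T ω' - M s ω') ^ 3)|F s]) ω) ∂μ
        = 4 * ∫ ω, ((M u ω - M s ω) * (μ[(fun ω' => (M T ω' - M u ω') ^ 3)|F u]) ω
          - (M u ω - M s ω) * (μ[(fun ω' => (M T ω' - M s ω') ^ 3)|F s]) ω) ∂μ :=
      integral_const_mul 4 _
    have h3c : ∫ ω, 4 * (M u ω - M s ω) *
          ((μ[(fun ω' => (M T ω' - M u ω') ^ 3)|F u]) ω -
            (μ[(fun ω' => (M T ω' - M s ω') ^ 3)|F s]) ω) ∂μ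
        = ∫ ω, 4 * ((M u ω - M s ω) * (μ[(fun ω' => (M T ω' - M u ω') ^ 3)|F u]) ω
          - (M u ω - M s ω) * (μ[(fun ω' => (M T ω' - M s ω') ^ 3)|F s]) ω) ∂μ :=
      integral_congr_ae (Eventually.of_forall fun ω => by ring)
    have h4a : ∫ ω, (((μ[(fun ω' => (M T ω' - M u ω') ^ 2)|F u]) ω) ^ 2
          - 2 * ((μ[(fun ω' => (M T ω' - M s ω') ^ 2)|F s]) ω *
            (μ[(fun ω' => (M T ω' - M u ω') ^ 2)|F u]) ω)) ∂μ
        = (∫ ω, ((μ[(fun ω' => (M T ω' - M u ω') ^ 2)|F u]) ω) ^ 2 ∂μ)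
          - ∫ ω, 2 * ((μ[(fun ω' => (M T ω' - M s ω') ^ 2)|F s]) ω *
            (μ[(fun ω' => (M T ω' - M u ω') ^ 2)|F u]) ω) ∂μ :=
      integral_sub iVu2 (iVsVu.const_mul 2)
    have h4b : ∫ ω, ((((μ[(fun ω' => (M T ω' - M u ω') ^ 2)|F u]) ω) ^ 2
          - 2 * ((μ[(fun ω' => (M T ω' - M s ω') ^ 2)|F s]) ω *
            (μ[(fun ω' => (M T ω' - M u ω') ^ 2)|F u]) ω))
          + ((μ[(fun ω' => (M T ω' - M s ω') ^ 2)|F s]) ω) ^ 2) ∂μ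
        = (∫ ω, (((μ[(fun ω' => (M T ω' - M u ω') ^ 2)|F u]) ω) ^ 2
          - 2 * ((μ[(fun ω' => (M T ω' - M s ω') ^ 2)|F s]) ω *
            (μ[(fun ω' => (M T ω' - M u ω') ^ 2)|F u]) ω)) ∂μ)
          + ∫ ω, ((μ[(fun ω' => (M T ω' - M s ω') ^ 2)|F s]) ω) ^ 2 ∂μ :=
      integral_add (iVu2.sub (iVsVu.const_mul 2)) iVs2
    have h4c : ∫ ω, 2 * ((μ[(fun ω' => (M T ω' - M s ω') ^ 2)|F s]) ω *
            (μ[(fun ω' => (M T ω' - M u ω') ^ 2)|F u]) ω) ∂μ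
        = 2 * ∫ ω, (μ[(fun ω' => (M T ω' - M s ω') ^ 2)|F s]) ω *
            (μ[(fun ω' => (M T ω' - M u ω') ^ 2)|F u]) ω ∂μ :=
      integral_const_mul 2 _
    have h4d : ∫ ω, 3 * ((μ[(fun ω' => (M T ω' - M u ω') ^ 2)|F u]) ω -
            (μ[(fun ω' => (M T ω' - M s ω') ^ 2)|F s]) ω) ^ 2 ∂μ
        = 3 * ∫ ω, ((μ[(fun ω' => (M T ω' - M u ω') ^ 2)|F u]) ω -
            (μ[(fun ω' => (M T ω' - M s ω') ^ 2)|F s]) ω) ^ 2 ∂μ :=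
      integral_const_mul 3 _
    have h4e : ∫ ω, ((μ[(fun ω' => (M T ω' - M u ω') ^ 2)|F u]) ω -
            (μ[(fun ω' => (M T ω' - M s ω') ^ 2)|F s]) ω) ^ 2 ∂μ
        = ∫ ω, ((((μ[(fun ω' => (M T ω' - M u ω') ^ 2)|F u]) ω) ^ 2
          - 2 * ((μ[(fun ω' => (M T ω' - M s ω') ^ 2)|F s]) ω *
            (μ[(fun ω' => (M T ω' - M u ω') ^ 2)|F u]) ω))
          + ((μ[(fun ω' => (M T ω' - M s ω') ^ 2)|F s]) ω) ^ 2) ∂μ :=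
      integral_congr_ae (Eventually.of_forall fun ω => by ring)
    linarith [t3, t2, t1, h2a, h2b, h2c, h3a, h3b, h3c, h4a, h4b, h4c, h4d, h4e]
  rw [e8]
  linarith [e1, e2, e3, e4, e5, e7]

/-- Integrability of the one-step realized-kurtosis summand. -/
lemma interval_integrable {Ω : Type*} {m0 : MeasurableSpace Ω} (μ : Measure Ω)
    [IsProbabilityMeasure μ] (F : Filtration ℝ m0) (M : ℝ → Ω → ℝ)
    (hM : Martingale M F μ) (T : ℝ) (hM4 : MemLp (M T) 4 μ)
    {s u : ℝ} (hsu : s ≤ u) (huT : u ≤ T) :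
    Integrable (fun ω => (M u ω - M s ω) ^ 4 +
        6 * (M u ω - M s ω) ^ 2 *
          ((μ[(fun ω' => (M T ω' - M u ω') ^ 2)|F u]) ω -
            (μ[(fun ω' => (M T ω' - M s ω') ^ 2)|F s]) ω) +
        4 * (M u ω - M s ω) *
          ((μ[(fun ω' => (M T ω' - M u ω') ^ 3)|F u]) ω -
            (μ[(fun ω' => (M T ω' - M s ω') ^ 3)|F s]) ω) +
        3 * ((μ[(fun ω' => (M T ω' - M u ω') ^ 2)|F u]) ω -
            (μ[(fun ω' => (M T ω' - M s ω') ^ 2)|F s]) ω) ^ 2) μ := by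
  have hsT : s ≤ T := hsu.trans huT
  have hms : F s ≤ m0 := F.le s
  have hmu : F u ≤ m0 := F.le u
  have hMs4 : MemLp (M s) 4 μ := martingale_memℒp_four hM hM4 hsT
  have hMu4 : MemLp (M u) 4 μ := martingale_memℒp_four hM hM4 huT
  have hA4 : MemLp (fun ω => M u ω - M s ω) 4 μ := hMu4.sub hMs4
  have hQs4 : MemLp (fun ω => M T ω - M s ω) 4 μ := hM4.sub hMs4
  have hQu4 : MemLp (fun ω => M T ω - M u ω) 4 μ := hM4.sub hMu4
  have hA2 : MemLp (fun ω => (M u ω - M s ω) ^ 2) 2 μ := memℒp_sq_of_four hA4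
  have hQs2 : MemLp (fun ω => (M T ω - M s ω) ^ 2) 2 μ := memℒp_sq_of_four hQs4
  have hQu2 : MemLp (fun ω => (M T ω - M u ω) ^ 2) 2 μ := memℒp_sq_of_four hQu4
  have hVsL2 : MemLp (μ[(fun ω' => (M T ω' - M s ω') ^ 2)|F s]) 2 μ :=
    memℒp_two_condexp hms hQs2
  have hVuL2 : MemLp (μ[(fun ω' => (M T ω' - M u ω') ^ 2)|F u]) 2 μ :=
    memℒp_two_condexp hmu hQu2
  have iA4 : Integrable (fun ω => (M u ω - M s ω) ^ 4) μ := integrable_pow_four hA4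
  have iA2Vu : Integrable
      (fun ω => (M u ω - M s ω) ^ 2 * (μ[(fun ω' => (M T ω' - M u ω') ^ 2)|F u]) ω) μ :=
    integrable_mul_L2 hA2 hVuL2
  have iA2Vs : Integrable
      (fun ω => (M u ω - M s ω) ^ 2 * (μ[(fun ω' => (M T ω' - M s ω') ^ 2)|F s]) ω) μ :=
    integrable_mul_L2 hA2 hVsL2
  have iAWu : Integrable
      (fun ω => (M u ω - M s ω) * (μ[(fun ω' => (M T ω' - M u ω') ^ 3)|F u]) ω) μ :=
    integrable_mul_condexp_cube hmu hA4 hQu4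
  have iAWs : Integrable
      (fun ω => (M u ω - M s ω) * (μ[(fun ω' => (M T ω' - M s ω') ^ 3)|F s]) ω) μ :=
    integrable_mul_condexp_cube hms hA4 hQs4
  have ig2 : Integrable (fun ω => 6 * (M u ω - M s ω) ^ 2 *
      ((μ[(fun ω' => (M T ω' - M u ω') ^ 2)|F u]) ω -
        (μ[(fun ω' => (M T ω' - M s ω') ^ 2)|F s]) ω)) μ :=
    ((iA2Vu.sub iA2Vs).const_mul 6).congr
      (Eventually.of_forall fun ω => by simp only [Pi.sub_apply]; ring)
  have ig3 : Integrable (fun ω => 4 * (M u ω - M s ω) *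
      ((μ[(fun ω' => (M T ω' - M u ω') ^ 3)|F u]) ω -
        (μ[(fun ω' => (M T ω' - M s ω') ^ 3)|F s]) ω)) μ :=
    ((iAWu.sub iAWs).const_mul 4).congr
      (Eventually.of_forall fun ω => by simp only [Pi.sub_apply]; ring)
  have ig4 : Integrable (fun ω => 3 * ((μ[(fun ω' => (M T ω' - M u ω') ^ 2)|F u]) ω -
      (μ[(fun ω' => (M T ω' - M s ω') ^ 2)|F s]) ω) ^ 2) μ :=
    ((hVuL2.sub hVsL2).integrable_sq.const_mul 3)
  exact ((iA4.add ig2).add ig3).add ig4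

/-- Realized kurtosis (Bae–Lee): for an `L⁴` martingale `M` on `[0,T]` with trivial `ℱ_0`,
`M⁽²⁾_t = E[(M_T − M_t)²|ℱ_t]`, `M⁽³⁾_t = E[(M_T − M_t)³|ℱ_t]`, and any partition
`0 = t_0 < ⋯ < t_N = T`,
`E[∑_j {(ΔM_j)⁴ + 6 (ΔM_j)² ΔM⁽²⁾_j + 4 ΔM_j ΔM⁽³⁾_j + 3 (ΔM⁽²⁾_j)²}]
  = E[(M_T − M_0)⁴] − 3 (E[(M_T − M_0)²])²`,
the fourth cumulant of `M_T − M_0`. -/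
theorem realized_kurtosis {Ω : Type*} {m0 : MeasurableSpace Ω}
    (μ : Measure Ω) [IsProbabilityMeasure μ] (T : ℝ) (hT : 0 < T)
    (F : Filtration ℝ m0)
    (hF0 : ∀ s : Set Ω, MeasurableSet[F 0] s → μ s = 0 ∨ μ s = 1)
    (M : ℝ → Ω → ℝ) (hM : Martingale M F μ) (hM4 : MemLp (M T) 4 μ)
    (N : ℕ) (hN : 1 ≤ N) (τ : ℕ → ℝ) (hτ0 : τ 0 = 0) (hτN : τ N = T)
    (hτ : ∀ j < N, τ j < τ (j + 1)) :
    ∫ ω, (∑ j ∈ Finset.range N,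
        ((M (τ (j + 1)) ω - M (τ j) ω) ^ 4 +
          6 * (M (τ (j + 1)) ω - M (τ j) ω) ^ 2 *
            ((μ[(fun ω' => (M T ω' - M (τ (j + 1)) ω') ^ 2)|F (τ (j + 1))]) ω -
              (μ[(fun ω' => (M T ω' - M (τ j) ω') ^ 2)|F (τ j)]) ω) +
          4 * (M (τ (j + 1)) ω - M (τ j) ω) *
            ((μ[(fun ω' => (M T ω' - M (τ (j + 1)) ω') ^ 3)|F (τ (j + 1))]) ω -
              (μ[(fun ω' => (M T ω' - M (τ j) ω') ^ 3)|F (τ j)]) ω) +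
          3 * ((μ[(fun ω' => (M T ω' - M (τ (j + 1)) ω') ^ 2)|F (τ (j + 1))]) ω -
              (μ[(fun ω' => (M T ω' - M (τ j) ω') ^ 2)|F (τ j)]) ω) ^ 2)) ∂μ
      = (∫ ω, (M T ω - M 0 ω) ^ 4 ∂μ) - 3 * (∫ ω, (M T ω - M 0 ω) ^ 2 ∂μ) ^ 2 := by
  have key : ∀ k, k ≤ N → ∀ j, j ≤ k → τ j ≤ τ k := by
    intro k
    induction k with
    | zero =>
      intro _ j hj
      have hj0 : j = 0 := Nat.le_zero.mp hj
      rw [hj0]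
    | succ n ih =>
      intro hn j hj
      rcases Nat.eq_or_lt_of_le hj with h | h
      · rw [h]
      · exact (ih (Nat.le_of_succ_le hn) j (Nat.lt_succ_iff.mp h)).trans
          (hτ n (Nat.lt_of_succ_le hn)).le
  have hτT : ∀ j, j ≤ N → τ j ≤ T := fun j hj => hτN ▸ key N le_rfl j hj
  have hint : ∀ j ∈ Finset.range N, Integrable (fun ω =>
      ((M (τ (j + 1)) ω - M (τ j) ω) ^ 4 +
          6 * (M (τ (j + 1)) ω - M (τ j) ω) ^ 2 *
            ((μ[(fun ω' => (M T ω' - M (τ (j + 1)) ω') ^ 2)|F (τ (j + 1))]) ω -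
              (μ[(fun ω' => (M T ω' - M (τ j) ω') ^ 2)|F (τ j)]) ω) +
          4 * (M (τ (j + 1)) ω - M (τ j) ω) *
            ((μ[(fun ω' => (M T ω' - M (τ (j + 1)) ω') ^ 3)|F (τ (j + 1))]) ω -
              (μ[(fun ω' => (M T ω' - M (τ j) ω') ^ 3)|F (τ j)]) ω) +
          3 * ((μ[(fun ω' => (M T ω' - M (τ (j + 1)) ω') ^ 2)|F (τ (j + 1))]) ω -
              (μ[(fun ω' => (M T ω' - M (τ j) ω') ^ 2)|F (τ j)]) ω) ^ 2)) μ := by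
    intro j hj
    have hjN := Finset.mem_range.mp hj
    exact interval_integrable μ F M hM T hM4 (hτ j hjN).le (hτT (j + 1) hjN)
  have hstep : ∀ j ∈ Finset.range N, (∫ ω, ((M (τ (j + 1)) ω - M (τ j) ω) ^ 4 +
          6 * (M (τ (j + 1)) ω - M (τ j) ω) ^ 2 *
            ((μ[(fun ω' => (M T ω' - M (τ (j + 1)) ω') ^ 2)|F (τ (j + 1))]) ω -
              (μ[(fun ω' => (M T ω' - M (τ j) ω') ^ 2)|F (τ j)]) ω) +
          4 * (M (τ (j + 1)) ω - M (τ j) ω) *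
            ((μ[(fun ω' => (M T ω' - M (τ (j + 1)) ω') ^ 3)|F (τ (j + 1))]) ω -
              (μ[(fun ω' => (M T ω' - M (τ j) ω') ^ 3)|F (τ j)]) ω) +
          3 * ((μ[(fun ω' => (M T ω' - M (τ (j + 1)) ω') ^ 2)|F (τ (j + 1))]) ω -
              (μ[(fun ω' => (M T ω' - M (τ j) ω') ^ 2)|F (τ j)]) ω) ^ 2) ∂μ)
      = ((∫ ω, (M T ω - M (τ j) ω) ^ 4 ∂μ)
        - 3 * ∫ ω, ((μ[(fun ω' => (M T ω' - M (τ j) ω') ^ 2)|F (τ j)]) ω) ^ 2 ∂μ)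
        - ((∫ ω, (M T ω - M (τ (j + 1)) ω) ^ 4 ∂μ)
        - 3 * ∫ ω, ((μ[(fun ω' => (M T ω' - M (τ (j + 1)) ω') ^ 2)|F (τ (j + 1))]) ω) ^ 2 ∂μ) := by
    intro j hj
    have hjN := Finset.mem_range.mp hj
    exact interval_step μ F M hM T hM4 (hτ j hjN).le (hτT (j + 1) hjN)
  calc ∫ ω, (∑ j ∈ Finset.range N,
        ((M (τ (j + 1)) ω - M (τ j) ω) ^ 4 +
          6 * (M (τ (j + 1)) ω - M (τ j) ω) ^ 2 *
            ((μ[(fun ω' => (M T ω' - M (τ (j + 1)) ω') ^ 2)|F (τ (j + 1))]) ω -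
              (μ[(fun ω' => (M T ω' - M (τ j) ω') ^ 2)|F (τ j)]) ω) +
          4 * (M (τ (j + 1)) ω - M (τ j) ω) *
            ((μ[(fun ω' => (M T ω' - M (τ (j + 1)) ω') ^ 3)|F (τ (j + 1))]) ω -
              (μ[(fun ω' => (M T ω' - M (τ j) ω') ^ 3)|F (τ j)]) ω) +
          3 * ((μ[(fun ω' => (M T ω' - M (τ (j + 1)) ω') ^ 2)|F (τ (j + 1))]) ω -
              (μ[(fun ω' => (M T ω' - M (τ j) ω') ^ 2)|F (τ j)]) ω) ^ 2)) ∂μ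
      = ∑ j ∈ Finset.range N, ∫ ω, ((M (τ (j + 1)) ω - M (τ j) ω) ^ 4 +
          6 * (M (τ (j + 1)) ω - M (τ j) ω) ^ 2 *
            ((μ[(fun ω' => (M T ω' - M (τ (j + 1)) ω') ^ 2)|F (τ (j + 1))]) ω -
              (μ[(fun ω' => (M T ω' - M (τ j) ω') ^ 2)|F (τ j)]) ω) +
          4 * (M (τ (j + 1)) ω - M (τ j) ω) *
            ((μ[(fun ω' => (M T ω' - M (τ (j + 1)) ω') ^ 3)|F (τ (j + 1))]) ω -
              (μ[(fun ω' => (M T ω' - M (τ j) ω') ^ 3)|F (τ j)]) ω) +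
          3 * ((μ[(fun ω' => (M T ω' - M (τ (j + 1)) ω') ^ 2)|F (τ (j + 1))]) ω -
              (μ[(fun ω' => (M T ω' - M (τ j) ω') ^ 2)|F (τ j)]) ω) ^ 2) ∂μ :=
        integral_finset_sum _ hint
    _ = ∑ j ∈ Finset.range N,
        (((∫ ω, (M T ω - M (τ j) ω) ^ 4 ∂μ)
        - 3 * ∫ ω, ((μ[(fun ω' => (M T ω' - M (τ j) ω') ^ 2)|F (τ j)]) ω) ^ 2 ∂μ)
          - ((∫ ω, (M T ω - M (τ (j + 1)) ω) ^ 4 ∂μ)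
        - 3 * ∫ ω, ((μ[(fun ω' => (M T ω' - M (τ (j + 1)) ω') ^ 2)|F (τ (j + 1))]) ω) ^ 2 ∂μ)) := Finset.sum_congr rfl hstep
    _ = ((∫ ω, (M T ω - M (τ 0) ω) ^ 4 ∂μ)
        - 3 * ∫ ω, ((μ[(fun ω' => (M T ω' - M (τ 0) ω') ^ 2)|F (τ 0)]) ω) ^ 2 ∂μ)
          - ((∫ ω, (M T ω - M (τ N) ω) ^ 4 ∂μ)
        - 3 * ∫ ω, ((μ[(fun ω' => (M T ω' - M (τ N) ω') ^ 2)|F (τ N)]) ω) ^ 2 ∂μ) := Finset.sum_range_sub' _ N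
    _ = (∫ ω, (M T ω - M 0 ω) ^ 4 ∂μ) - 3 * (∫ ω, (M T ω - M 0 ω) ^ 2 ∂μ) ^ 2 := by
      rw [hτ0, hτN]
      have eZ : (fun ω' : Ω => (M T ω' - M T ω') ^ 2) = fun _ : Ω => (0 : ℝ) :=
        funext fun ω => by simp
      rw [eZ, condExp_const (F.le T)]
      rw [integral_sq_condexp_trivial (F.le 0) hF0]
      simp
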